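/- Let A(τ,σ) = 1/2 + Σ_{ι=0}^{N₁} ξ_{ι+1} P_{ι+1}(τ)P_ι(σ) − Σ_{ι=0}^{N₂} ξ_{ι+1} P_{ι+1}(σ)P_ι(τ), with ξ_ι = 1/(2√(4ι²−1)). Then A satisfies the simplifying condition C̆(α) with α = min(N₁+1, N₂+2): ∫₀¹ A(τ,σ) σ^{κ−1} dσ = τ^κ/κ for κ = 1,…,α and all τ ∈ [0,1]. -/

import Mathlib

/-- The ι-th normalized shifted Legendre polynomial on [0,1], via Rodrigues' formula. -/
noncomputable def legP (ι : ℕ) (x : ℝ) : ℝ :=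
  (Real.sqrt (2 * ι + 1) / (Nat.factorial ι)) *
    iteratedDeriv ι (fun y : ℝ => y ^ ι * (y - 1) ^ ι) x

/-- ξ_ι = 1/(2√(4ι²-1)). -/
noncomputable def legXi (ι : ℕ) : ℝ := 1 / (2 * Real.sqrt (4 * (ι : ℝ) ^ 2 - 1))

open Polynomial intervalIntegral

namespace Leg

noncomputable def f (n : ℕ) : ℝ[X] := X ^ n * (X - 1) ^ n
noncomputable def Q (n : ℕ) : ℝ[X] := derivative^[n] (f n)
noncomputable def c (n : ℕ) : ℝ := Real.sqrt (2 * n + 1) / (Nat.factorial n)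
noncomputable def p (n : ℕ) : ℝ[X] := C (c n) * Q n

lemma iteratedDeriv_eval (n : ℕ) (q : ℝ[X]) :
    iteratedDeriv n (fun y : ℝ => q.eval y) = fun x => (derivative^[n] q).eval x := by
  induction n generalizing q with
  | zero => simp
  | succ n ih =>
    rw [iteratedDeriv_succ']
    have : (deriv fun y : ℝ => q.eval y) = fun y => (derivative q).eval y := by
      funext y; exact (Polynomial.hasDerivAt q y).deriv
    rw [this, ih, Function.iterate_succ_apply]

lemma legP_eval (n : ℕ) (x : ℝ) : legP n x = (p n).eval x := by
  have h : (fun y : ℝ => y ^ n * (y - 1) ^ n) = fun y => (f n).eval y := by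
    funext y; simp [f]
  rw [legP, h, iteratedDeriv_eval]
  simp [p, Q, c]

noncomputable def J (q : ℝ[X]) : ℝ := ∫ x in (0:ℝ)..1, q.eval x

lemma J_intble (q : ℝ[X]) : IntervalIntegrable (fun x => q.eval x) MeasureTheory.volume (0:ℝ) 1 :=
  (q.continuous_aeval).intervalIntegrable _ _

lemma J_add (q r : ℝ[X]) : J (q + r) = J q + J r := by
  simp only [J, eval_add]
  exact integral_add (J_intble q) (J_intble r)

lemma J_zero : J 0 = 0 := by simp [J]

lemma J_Cmul (a : ℝ) (q : ℝ[X]) : J (C a * q) = a * J q := by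
  simp only [J, eval_mul, eval_C]
  exact integral_const_mul a _

lemma J_smul (a : ℝ) (q : ℝ[X]) : J (a • q) = a * J q := by
  rw [smul_eq_C_mul, J_Cmul]

lemma J_sub (q r : ℝ[X]) : J (q - r) = J q - J r := by
  have := J_add (q - r) r; simp at this; linarith

lemma J_sum {ι : Type*} (s : Finset ι) (g : ι → ℝ[X]) :
    J (∑ i ∈ s, g i) = ∑ i ∈ s, J (g i) := by
  classical
  induction s using Finset.induction with
  | empty => simp [J_zero]
  | insert _ _ h ih => rw [Finset.sum_insert h, J_add, ih, Finset.sum_insert h]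

lemma J_ibp (u v : ℝ[X]) :
    J (derivative u * v) =
      u.eval 1 * v.eval 1 - u.eval 0 * v.eval 0 - J (u * derivative v) := by
  have h := intervalIntegral.integral_deriv_mul_eq_sub (a := (0:ℝ)) (b := 1)
    (u := fun x => u.eval x) (v := fun x => v.eval x)
    (u' := fun x => (derivative u).eval x) (v' := fun x => (derivative v).eval x)
    (fun x _ => u.hasDerivAt x) (fun x _ => v.hasDerivAt x)
    (J_intble _) (J_intble _)
  have hsplit : J (derivative u * v) + J (u * derivative v)
      = ∫ x in (0:ℝ)..1,
        ((derivative u).eval x * v.eval x + u.eval x * (derivative v).eval x) := by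
    rw [J, J, ← intervalIntegral.integral_add (J_intble _) (J_intble _)]
    simp only [eval_mul]
  rw [h] at hsplit
  linarith

lemma pow_dvd_derivative {g q : ℝ[X]} {m : ℕ} (h : g ^ (m + 1) ∣ q) :
    g ^ m ∣ derivative q := by
  obtain ⟨h', rfl⟩ := h
  rw [derivative_mul, derivative_pow, Nat.add_sub_cancel]
  exact dvd_add (((dvd_mul_left (g ^ m) _).mul_right _).mul_right _)
    ((pow_dvd_pow g (Nat.le_succ m)).mul_right _)

lemma f_eq (n : ℕ) : f n = (X * (X - 1)) ^ n := by rw [f, mul_pow]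

lemma boundary_dvd (n k : ℕ) (hk : k ≤ n) :
    (X * (X - 1) : ℝ[X]) ^ (n - k) ∣ derivative^[k] (f n) := by
  induction k with
  | zero => simpa [f_eq] using dvd_refl _
  | succ k ih =>
    have hk' : k ≤ n := Nat.le_of_succ_le hk
    have h1 : (X * (X - 1) : ℝ[X]) ^ ((n - (k + 1)) + 1) ∣ derivative^[k] (f n) := by
      have hle : (n - (k + 1)) + 1 ≤ n - k := by omega
      exact (pow_dvd_pow _ hle).trans (ih hk')
    rw [Function.iterate_succ_apply']
    exact pow_dvd_derivative h1

lemma eval_iterate_f (n k : ℕ) (hk : k < n) :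
    (derivative^[k] (f n)).eval 0 = 0 ∧ (derivative^[k] (f n)).eval 1 = 0 := by
  obtain ⟨h, hh⟩ := boundary_dvd n k hk.le
  have hnk : n - k ≠ 0 := by omega
  constructor <;> rw [hh] <;>
    simp [eval_mul, eval_pow, zero_pow hnk]

lemma J_iterate (n : ℕ) (v : ℝ[X]) :
    ∀ k, k ≤ n → J (Q n * v) = (-1:ℝ)^k * J (derivative^[n-k] (f n) * derivative^[k] v) := by
  intro k
  induction k with
  | zero => intro _; simp [Q]
  | succ k ih =>
    intro hk
    have e := ih (Nat.le_of_succ_le hk)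
    have hnk : n - k = (n - (k + 1)) + 1 := by omega
    rw [hnk, Function.iterate_succ_apply'] at e
    have hb := eval_iterate_f n (n - (k+1)) (by omega)
    have h := J_ibp (derivative^[n - (k+1)] (f n)) (derivative^[k] v)
    rw [hb.1, hb.2, ← Function.iterate_succ_apply' derivative k v] at h
    rw [e, h]
    ring

lemma J_Q_mul_eq_zero {n : ℕ} {v : ℝ[X]} (h : v.natDegree < n) : J (Q n * v) = 0 := by
  rw [J_iterate n v n le_rfl, Polynomial.iterate_derivative_eq_zero h]
  simp [J_zero]

lemma J_beta (b : ℕ) : ∀ a : ℕ, J (X ^ a * (1 - X) ^ b)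
    = (a.factorial * b.factorial : ℝ) / (a + b + 1).factorial := by
  induction b with
  | zero =>
    intro a
    have : J (X ^ a * (1 - X) ^ 0) = ∫ x in (0:ℝ)..1, x ^ a := by
      simp [J]
    rw [this, integral_pow]
    rw [Nat.factorial_succ]
    have : ((a:ℝ) + 1) ≠ 0 := by positivity
    have hf : (a.factorial : ℝ) ≠ 0 := by positivity
    field_simp
    simp
  | succ b ih =>
    intro a
    have h := J_ibp (X ^ (a + 1) : ℝ[X]) ((1 - X) ^ (b + 1))
    have h1 : derivative (X ^ (a+1) : ℝ[X]) = C ((a:ℝ)+1) * X ^ a := by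
      rw [derivative_X_pow]
      push_cast
      simp
    have h2 : derivative ((1 - X : ℝ[X]) ^ (b+1)) = C (-((b:ℝ)+1)) * (1 - X) ^ b := by
      rw [derivative_pow]
      simp only [derivative_sub, derivative_one, derivative_X, zero_sub, Nat.add_sub_cancel]
      push_cast
      rw [C_neg]
      ring
    rw [h1, h2, mul_assoc, J_Cmul, mul_left_comm, J_Cmul] at h
    simp only [eval_pow, eval_sub, eval_one, eval_X, one_pow, sub_self, zero_pow (Nat.succ_ne_zero b),
      zero_pow (Nat.succ_ne_zero a), mul_zero, zero_mul, mul_one, sub_zero, zero_sub] at h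
    rw [ih (a+1)] at h
    have ha : ((a:ℝ) + 1) ≠ 0 := by positivity
    have key : J (X ^ a * (1 - X) ^ (b+1))
        = ((b:ℝ)+1) * (((a+1).factorial * b.factorial : ℝ) / ((a+1) + b + 1).factorial) / ((a:ℝ)+1) := by
      rw [eq_div_iff ha, mul_comm (J _)]
      linarith
    rw [key]
    have e1 : (a + 1) + b + 1 = a + (b + 1) + 1 := by omega
    rw [e1, Nat.factorial_succ (a), Nat.factorial_succ (b)]
    have hf : ((a + (b+1) + 1).factorial : ℝ) ≠ 0 := by positivity
    push_cast
    field_simp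

lemma J_f (n : ℕ) : J (f n) = (-1:ℝ)^n * ((n.factorial : ℝ)^2 / (2*n+1).factorial) := by
  have hx : f n = C ((-1:ℝ)^n) * (X ^ n * (1 - X) ^ n) := by
    rw [f]
    have h1 : (X - 1 : ℝ[X]) = -(1 - X) := by ring
    rw [h1, neg_pow, map_pow, map_neg, map_one]
    ring
  rw [hx, J_Cmul, J_beta]
  have h2 : n + n + 1 = 2 * n + 1 := by omega
  rw [h2, sq]


lemma J_Q_mul_eq_zero' {n : ℕ} {v : ℝ[X]} (h : v.degree < (n : ℕ)) : J (Q n * v) = 0 := by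
  rcases eq_or_ne v 0 with rfl | hv
  · simp [J_zero]
  · exact J_Q_mul_eq_zero ((natDegree_lt_iff_degree_lt hv).2 h)

lemma J_Q_X_pow (n : ℕ) : J (Q n * X ^ n) = (n.factorial : ℝ)^3 / (2*n+1).factorial := by
  rw [J_iterate n (X ^ n) n le_rfl, Nat.sub_self, Function.iterate_zero_apply,
    Polynomial.iterate_derivative_X_pow_eq_C_mul, Nat.sub_self, Nat.descFactorial_self,
    pow_zero, mul_one, mul_comm (f n) _, J_Cmul, J_f]
  have hee : (-1:ℝ)^n * (-1:ℝ)^n = 1 := by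
    rw [← pow_add]
    exact Even.neg_one_pow ⟨n, rfl⟩
  linear_combination ((n.factorial:ℝ) * ((n.factorial:ℝ)^2 / ((2*n+1).factorial : ℝ))) * hee

lemma f_coeff (n m : ℕ) : (f n).coeff (m + n) = (-1:ℝ)^(n - m) * n.choose m := by
  rw [f, coeff_X_pow_mul]
  have hC : (C (-1:ℝ) : ℝ[X]) = -1 := by simp
  have h1 : (X - 1 : ℝ[X]) = X + C (-1) := by rw [hC]; ring
  rw [h1, coeff_X_add_C_pow]

lemma f_natDegree_le (n : ℕ) : (f n).natDegree ≤ 2 * n := by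
  refine (natDegree_mul_le).trans ?_
  have h1 : (X - 1 : ℝ[X]).natDegree ≤ 1 := by
    refine (natDegree_sub_le _ _).trans ?_
    simp
  calc (X ^ n : ℝ[X]).natDegree + ((X - 1 : ℝ[X]) ^ n).natDegree
      ≤ n + n := by
        gcongr
        · exact natDegree_X_pow_le n
        · exact (natDegree_pow_le).trans (by nlinarith)
    _ = 2 * n := by ring

lemma Q_coeff (n m : ℕ) : (Q n).coeff m = ((m + n).descFactorial n : ℝ) * (f n).coeff (m + n) := by
  rw [Q, Polynomial.coeff_iterate_derivative, nsmul_eq_mul]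

lemma Q_coeff_self (n : ℕ) : (Q n).coeff n = ((2 * n).descFactorial n : ℝ) := by
  rw [Q_coeff]
  have := f_coeff n n
  rw [Nat.sub_self, pow_zero, one_mul, Nat.choose_self] at this
  rw [this, Nat.cast_one, mul_one]
  norm_num [two_mul]

lemma Q_natDegree_le (n : ℕ) : (Q n).natDegree ≤ n := by
  refine (natDegree_iterate_derivative _ _).trans ?_
  have := f_natDegree_le n
  omega

lemma Q_eval_zero (n : ℕ) : (Q n).eval 0 = (-1:ℝ)^n * n.factorial := by
  rw [← coeff_zero_eq_eval_zero, Q_coeff, zero_add]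
  have := f_coeff n 0
  rw [zero_add, Nat.sub_zero, Nat.choose_zero_right, Nat.cast_one, mul_one] at this
  rw [this, Nat.descFactorial_self]
  ring

lemma Q_sub_degree (n : ℕ) :
    (Q n - C (((2 * n).descFactorial n : ℝ)) * X ^ n).degree < (n : WithBot ℕ) := by
  rw [degree_lt_iff_coeff_zero]
  intro m hm
  rcases eq_or_lt_of_le hm with rfl | hlt
  · simp [coeff_sub, Q_coeff_self, coeff_C_mul, coeff_X_pow]
  · have hm' : (n : ℕ) < m := by exact_mod_cast hlt
    rw [coeff_sub, Q_coeff, coeff_C_mul, coeff_X_pow, if_neg (by omega), mul_zero, sub_zero]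
    have hz : (f n).coeff (m + n) = 0 := by
      apply coeff_eq_zero_of_natDegree_lt
      have := f_natDegree_le n
      omega
    rw [hz, mul_zero]

lemma J_QQ (n : ℕ) : J (Q n * Q n)
    = ((2 * n).descFactorial n : ℝ) * ((n.factorial : ℝ)^3 / (2*n+1).factorial) := by
  have hsplit : Q n * Q n
      = Q n * (Q n - C (((2 * n).descFactorial n : ℝ)) * X ^ n)
        + C (((2 * n).descFactorial n : ℝ)) * (Q n * X ^ n) := by ring
  rw [hsplit, J_add, J_Q_mul_eq_zero' (Q_sub_degree n), J_Cmul, J_Q_X_pow, zero_add]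

lemma p_natDegree_le (n : ℕ) : (p n).natDegree ≤ n :=
  (natDegree_C_mul_le _ _).trans (Q_natDegree_le n)

lemma c_sq (n : ℕ) : c n ^ 2 = (2 * n + 1) / (n.factorial : ℝ)^2 := by
  rw [c, div_pow, Real.sq_sqrt (by positivity)]

lemma J_pp_self (n : ℕ) : J (p n * p n) = 1 := by
  have h1 : p n * p n = C (c n) * (C (c n) * (Q n * Q n)) := by rw [p]; ring
  rw [h1, J_Cmul, J_Cmul, J_QQ]
  have key := Nat.factorial_mul_descFactorial (show n ≤ 2*n by omega)
  rw [show 2*n - n = n from by omega] at key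
  have hDF : ((2*n).descFactorial n : ℝ) * (n.factorial : ℝ) = ((2*n).factorial : ℝ) := by
    exact_mod_cast (mul_comm (n.factorial) _ ▸ key)
  have hF : (n.factorial : ℝ) ≠ 0 := by positivity
  have hW : ((2*n).factorial : ℝ) ≠ 0 := by positivity
  have hD : ((2*n).descFactorial n : ℝ) ≠ 0 := left_ne_zero_of_mul (hDF ▸ hW)
  have hT : ((2*n+1).factorial : ℝ) = ((2*n:ℕ)+1 : ℝ) * ((2*n).factorial : ℝ) := by
    rw [Nat.factorial_succ]; push_cast; ring
  have hcc : c n * c n * ((n.factorial:ℝ) * (n.factorial:ℝ)) = 2*(n:ℝ)+1 := by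
    have h := c_sq n
    rw [eq_div_iff (show ((n.factorial:ℝ))^2 ≠ 0 by positivity)] at h
    linear_combination h
  rw [hT, ← hDF]
  have h2n1 : ((2*(n:ℝ))+1) ≠ 0 := by positivity
  field_simp
  push_cast
  linear_combination hcc

lemma J_pp_ne {i j : ℕ} (h : j < i) : J (p i * p j) = 0 := by
  have h1 : p i * p j = C (c i) * (Q i * (C (c j) * Q j)) := by rw [p, p]; ring
  rw [h1, J_Cmul]
  have hd : (C (c j) * Q j).degree < (i : ℕ) := by
    rcases eq_or_ne (C (c j) * Q j) 0 with h0 | h0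
    · rw [h0, degree_zero]; exact WithBot.bot_lt_coe i
    · rw [← natDegree_lt_iff_degree_lt h0] at *
      have := p_natDegree_le j
      rw [p] at this
      omega
  rw [J_Q_mul_eq_zero' hd, mul_zero]


lemma J_pp {i j : ℕ} (h : i ≠ j) : J (p i * p j) = 0 := by
  rcases lt_or_gt_of_ne h with hlt | hgt
  · rw [mul_comm]; exact J_pp_ne hlt
  · exact J_pp_ne hgt

lemma p_zero : p 0 = 1 := by
  rw [p, Q, f]
  simp [c, Real.sqrt_one]

lemma c_pos (n : ℕ) : 0 < c n :=
  div_pos (Real.sqrt_pos.2 (by positivity)) (by positivity)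

lemma desc_pos (n : ℕ) : (0:ℝ) < ((2*n).descFactorial n : ℝ) := by
  have key := Nat.factorial_mul_descFactorial (show n ≤ 2*n by omega)
  have : (2*n).descFactorial n ≠ 0 := by
    intro h0
    rw [h0, mul_zero] at key
    exact (Nat.factorial_ne_zero (2*n)) key.symm
  positivity

lemma p_coeff_self_ne (n : ℕ) : (p n).coeff n ≠ 0 := by
  rw [p, coeff_C_mul, Q_coeff_self]
  have h1 := c_pos n
  have h2 := desc_pos n
  positivity

lemma p_natDegree (n : ℕ) : (p n).natDegree = n :=
  le_antisymm (p_natDegree_le n) (le_natDegree_of_ne_zero (p_coeff_self_ne n))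

lemma mem_span_p (n : ℕ) :
    ∀ N (q : ℝ[X]), q.natDegree ≤ N → q.degree < (n : WithBot ℕ) →
      q ∈ Submodule.span ℝ (Set.range fun i : Fin n => p i) := by
  intro N
  induction N with
  | zero =>
    intro q hN hdeg
    rcases eq_or_ne q 0 with rfl | hq
    · exact zero_mem _
    · have hn : 0 < n := by
        rcases Nat.eq_zero_or_pos n with rfl | h
        · exfalso
          rw [Nat.cast_zero, Nat.WithBot.lt_zero_iff, degree_eq_bot] at hdeg
          exact hq hdeg
        · exact h
      have hq0 : q = C (q.coeff 0) := Polynomial.eq_C_of_natDegree_le_zero hN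
      have : q = q.coeff 0 • p 0 := by
        rw [p_zero, smul_eq_C_mul, mul_one, ← hq0]
      rw [this]
      exact Submodule.smul_mem _ _ (Submodule.subset_span ⟨⟨0, hn⟩, rfl⟩)
  | succ N ih =>
    intro q hN hdeg
    rcases eq_or_ne q 0 with rfl | hq
    · exact zero_mem _
    rcases le_or_gt q.natDegree N with hle | hgt
    · exact ih q hle hdeg
    have hd : q.natDegree = N + 1 := le_antisymm hN hgt
    set d := q.natDegree with hdd
    have hdn : d < n := by
      have h1 : (d : WithBot ℕ) < (n : WithBot ℕ) := by
        rw [← degree_eq_natDegree hq]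
        exact hdeg
      exact_mod_cast h1
    have hlc : (p d).leadingCoeff = (p d).coeff d := by
      rw [leadingCoeff, p_natDegree]
    have hlcne : (p d).leadingCoeff ≠ 0 := by rw [hlc]; exact p_coeff_self_ne d
    have hpne : p d ≠ 0 := fun h0 => hlcne (by rw [h0, leadingCoeff_zero])
    set a := q.leadingCoeff / (p d).leadingCoeff with ha
    have hane : a ≠ 0 := div_ne_zero (leadingCoeff_ne_zero.2 hq) hlcne
    have hdegeq : (C a * p d).degree = q.degree := by
      rw [degree_mul, degree_C hane, zero_add, degree_eq_natDegree hpne,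
        degree_eq_natDegree hq, p_natDegree]
    have hlceq : (C a * p d).leadingCoeff = q.leadingCoeff := by
      rw [leadingCoeff_mul, leadingCoeff_C, ha, div_mul_cancel₀ _ hlcne]
    have hsub : (q - C a * p d).degree < q.degree := by
      exact degree_sub_lt hdegeq.symm hq hlceq.symm
    set q' := q - C a * p d with hq'
    have hmem : q' ∈ Submodule.span ℝ (Set.range fun i : Fin n => p i) := by
      rcases eq_or_ne q' 0 with h0 | h0
      · rw [h0]; exact zero_mem _
      · refine ih q' ?_ (hsub.trans hdeg)
        have := natDegree_lt_natDegree h0 hsub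
        omega
    have hsplit : q = q' + a • p d := by rw [hq', smul_eq_C_mul]; ring
    rw [hsplit]
    exact Submodule.add_mem _ hmem
      (Submodule.smul_mem _ _ (Submodule.subset_span ⟨⟨d, hdn⟩, rfl⟩))

lemma exists_rep (k : ℕ) : ∃ r : Fin (k+1) → ℝ, ∑ i, r i • p i = (X : ℝ[X])^k := by
  have h : (X:ℝ[X])^k ∈ Submodule.span ℝ (Set.range fun i : Fin (k+1) => p i) := by
    refine mem_span_p (k+1) k (X^k) (natDegree_X_pow_le k) ?_
    rw [degree_X_pow]
    exact_mod_cast Nat.lt_succ_self k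
  exact (Submodule.mem_span_range_iff_exists_fun ℝ).1 h

lemma J_p_low {j k : ℕ} (h : k < j) : J (p j * X ^ k) = 0 := by
  rw [p, mul_assoc, J_Cmul, J_Q_mul_eq_zero (by rw [natDegree_X_pow]; exact h), mul_zero]

lemma J_p_rep {k : ℕ} {r : Fin (k+1) → ℝ} (hr : ∑ i, r i • p i = (X:ℝ[X])^k)
    (j : Fin (k+1)) : J (p j * X ^ k) = r j := by
  rw [← hr, Finset.mul_sum, J_sum]
  rw [Finset.sum_eq_single j]
  · rw [mul_smul_comm, J_smul, J_pp_self, mul_one]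
  · intro i _ hij
    rw [mul_smul_comm, J_smul, J_pp (fun hc => hij (by exact Fin.ext hc.symm ▸ rfl)), mul_zero]
  · intro hj
    exact absurd (Finset.mem_univ j) hj

lemma chooseId (k m : ℕ) :
    ((k+2).choose (m+1) : ℝ) * (((m:ℝ)+(k:ℝ)+3)*((m:ℝ)+(k:ℝ)+2))
      = (((k:ℝ)+1)*((k:ℝ)+2)) * (k.choose (m+1) : ℝ)
        + 2*(2*(k:ℝ)+3)*((k:ℝ)+2)*(((k+1).choose m : ℝ)) := by
  by_cases h1 : k + 2 ≤ m
  · rw [Nat.choose_eq_zero_of_lt (by omega), Nat.choose_eq_zero_of_lt (by omega),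
      Nat.choose_eq_zero_of_lt (by omega)]
    norm_num
  by_cases h2 : m = k + 1
  · subst h2
    rw [show k+1+1 = k+2 from by omega, Nat.choose_self,
      Nat.choose_eq_zero_of_lt (by omega), Nat.choose_self]
    push_cast
    ring
  by_cases h3 : m = k
  · subst h3
    rw [Nat.choose_succ_self_right, Nat.choose_succ_self,
      Nat.choose_succ_self_right]
    push_cast
    ring
  -- now m + 1 ≤ k
  obtain ⟨i, rfl⟩ : ∃ i, k = m + i + 1 := ⟨k - m - 1, by omega⟩
  rw [show m+i+1+2 = m+i+3 from by omega, show m+i+1+1 = m+i+2 from by omega]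
  rw [Nat.cast_choose ℝ (show m+1 ≤ m+i+3 by omega),
    Nat.cast_choose ℝ (show m+1 ≤ m+i+1 by omega),
    Nat.cast_choose ℝ (show m ≤ m+i+2 by omega),
    show m+i+3-(m+1) = i+2 from by omega,
    show m+i+1-(m+1) = i from by omega,
    show m+i+2-m = i+2 from by omega]
  have F3 : ((m+i+3).factorial : ℝ) = ((m:ℝ)+i+3)*((m:ℝ)+i+2)*((m+i+1).factorial : ℝ) := by
    rw [show m+i+3 = (m+i+2)+1 from by omega, Nat.factorial_succ,
      show m+i+2 = (m+i+1)+1 from by omega, Nat.factorial_succ]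
    push_cast
    ring
  have F2 : ((m+i+2).factorial : ℝ) = ((m:ℝ)+i+2)*((m+i+1).factorial : ℝ) := by
    rw [show m+i+2 = (m+i+1)+1 from by omega, Nat.factorial_succ]
    push_cast
    ring
  have Fi2 : ((i+2).factorial : ℝ) = ((i:ℝ)+2)*((i:ℝ)+1)*(i.factorial : ℝ) := by
    rw [show i+2 = (i+1)+1 from by omega, Nat.factorial_succ, Nat.factorial_succ]
    push_cast
    ring
  have Fm1 : ((m+1).factorial : ℝ) = ((m:ℝ)+1)*(m.factorial : ℝ) := by
    rw [Nat.factorial_succ]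
    push_cast
    ring
  rw [F3, F2, Fi2, Fm1]
  have h01 : (m.factorial : ℝ) ≠ 0 := by positivity
  have h02 : (i.factorial : ℝ) ≠ 0 := by positivity
  have h03 : ((m+i+1).factorial : ℝ) ≠ 0 := by positivity
  have h04 : ((m:ℝ)+1) ≠ 0 := by positivity
  have h05 : ((i:ℝ)+1) ≠ 0 := by positivity
  have h06 : ((i:ℝ)+2) ≠ 0 := by positivity
  field_simp
  push_cast
  ring

lemma star (k : ℕ) : derivative (Q (k+2))
    = (((k:ℝ)+1)*((k:ℝ)+2)) • derivative (Q k)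
      + (2*(2*(k:ℝ)+3)*((k:ℝ)+2)) • Q (k+1) := by
  ext m
  simp only [coeff_derivative, coeff_add, coeff_smul, smul_eq_mul]
  rw [Q_coeff (k+2) (m+1), Q_coeff k (m+1), Q_coeff (k+1) m]
  -- normalize indices
  rw [show m+1+(k+2) = m+k+3 from by omega, show m+1+k = m+k+1 from by omega,
    show m+(k+1) = m+k+1 from by omega]
  have hf1 : (f (k+2)).coeff (m+k+3) = (-1:ℝ)^(k+1-m) * ((k+2).choose (m+1)) := by
    rw [show m+k+3 = (m+1)+(k+2) from by omega, f_coeff (k+2) (m+1),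
      show (k+2)-(m+1) = k+1-m from by omega]
  have hf2 : (f k).coeff (m+k+1) = (-1:ℝ)^(k+1-m) * (k.choose (m+1)) := by
    rw [show m+k+1 = (m+1)+k from by omega, f_coeff k (m+1)]
    by_cases h : m + 1 ≤ k
    · rw [show k+1-m = (k-(m+1))+2 from by omega, pow_add]
      norm_num
    · rw [Nat.choose_eq_zero_of_lt (by omega)]
      norm_num
  have hf3 : (f (k+1)).coeff (m+k+1) = (-1:ℝ)^(k+1-m) * ((k+1).choose m) := by
    rw [show m+k+1 = m+(k+1) from by omega]
    exact f_coeff (k+1) m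
  rw [hf1, hf2, hf3]
  have e1 : ((m+k+3).descFactorial (k+2) : ℝ) * ((m:ℝ)+1)
      = ((m:ℝ)+k+3)*((m:ℝ)+k+2) * ((m+k+1).descFactorial (k+1) : ℝ) := by
    have h1 : (m+k+3).descFactorial (k+3) = (m+1) * ((m+k+3).descFactorial (k+2)) := by
      rw [show k+3 = (k+2)+1 from by omega, Nat.descFactorial_succ,
        show m+k+3-(k+2) = m+1 from by omega]
    have h2 : (m+k+3).descFactorial (k+3)
        = (m+k+3)*((m+k+2)*((m+k+1).descFactorial (k+1))) := by
      rw [show m+k+3 = (m+k+2)+1 from by omega, show k+3 = (k+2)+1 from by omega,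
        Nat.succ_descFactorial_succ,
        show m+k+2 = (m+k+1)+1 from by omega, show k+2 = (k+1)+1 from by omega,
        Nat.succ_descFactorial_succ]
    have h3 := h1.symm.trans h2
    have h4 : ((m+1) * ((m+k+3).descFactorial (k+2)) : ℝ)
        = ((m:ℝ)+k+3)*(((m:ℝ)+k+2)*((m+k+1).descFactorial (k+1) : ℝ)) := by
      exact_mod_cast congrArg (Nat.cast : ℕ → ℝ) h3
    push_cast at h4 ⊢
    linarith [h4]
  have e2 : ((m+k+1).descFactorial (k+1) : ℝ) = ((m:ℝ)+1) * ((m+k+1).descFactorial k : ℝ) := by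
    have h1 : (m+k+1).descFactorial (k+1) = (m+1) * ((m+k+1).descFactorial k) := by
      rw [Nat.descFactorial_succ, show m+k+1-k = m+1 from by omega]
    exact_mod_cast congrArg (Nat.cast : ℕ → ℝ) h1
  have cid := chooseId k m
  push_cast
  set S := (-1:ℝ)^(k+1-m)
  set C1 := ((k+2).choose (m+1) : ℝ)
  set C2 := (k.choose (m+1) : ℝ)
  set C3 := ((k+1).choose m : ℝ)
  set D1 := ((m+k+3).descFactorial (k+2) : ℝ)
  set D2 := ((m+k+1).descFactorial k : ℝ)
  set D := ((m+k+1).descFactorial (k+1) : ℝ)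
  linear_combination (S*C1)*e1 + (((k:ℝ)+1)*((k:ℝ)+2)*S*C2)*e2 + S*D*cid

lemma xi_c (t : ℕ) : legXi (t+1) * c (t+1)
    = 1/(2 * Real.sqrt (2*(t:ℝ)+1) * ((t+1).factorial : ℝ)) := by
  rw [legXi, c]
  push_cast
  rw [show 4*((t:ℝ)+1)^2 - 1 = (2*(t:ℝ)+1)*(2*(t:ℝ)+3) from by ring,
    Real.sqrt_mul (by positivity), show 2*((t:ℝ)+1)+1 = 2*(t:ℝ)+3 from by ring]
  have h1 : Real.sqrt (2*(t:ℝ)+1) ≠ 0 := ne_of_gt (Real.sqrt_pos.2 (by positivity))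
  have h2 : Real.sqrt (2*(t:ℝ)+3) ≠ 0 := ne_of_gt (Real.sqrt_pos.2 (by positivity))
  have h3 : ((t+1).factorial : ℝ) ≠ 0 := by
    have := Nat.factorial_pos (t+1); positivity
  field_simp

lemma xi_c' (t : ℕ) : legXi (t+1) * c t
    = 1/(2 * Real.sqrt (2*(t:ℝ)+3) * (t.factorial : ℝ)) := by
  rw [legXi, c]
  push_cast
  rw [show 4*((t:ℝ)+1)^2 - 1 = (2*(t:ℝ)+1)*(2*(t:ℝ)+3) from by ring,
    Real.sqrt_mul (by positivity)]
  have h1 : Real.sqrt (2*(t:ℝ)+1) ≠ 0 := ne_of_gt (Real.sqrt_pos.2 (by positivity))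
  have h2 : Real.sqrt (2*(t:ℝ)+3) ≠ 0 := ne_of_gt (Real.sqrt_pos.2 (by positivity))
  have h3 : ((t).factorial : ℝ) ≠ 0 := by
    have := Nat.factorial_pos t; positivity
  field_simp

lemma fac_succ_real (n : ℕ) : ((n+1).factorial : ℝ) = ((n:ℝ)+1) * (n.factorial : ℝ) := by
  rw [Nat.factorial_succ]; push_cast; ring

lemma xi2 (k : ℕ) : legXi (k+2) * c (k+2)
    = 1/(2 * Real.sqrt (2*(k:ℝ)+3) * ((k+2).factorial : ℝ)) := by
  have h := xi_c (k+1)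
  rw [show k+1+1 = k+2 from by omega] at h
  rw [h]
  push_cast
  rw [show 2*((k:ℝ)+1)+1 = 2*(k:ℝ)+3 from by ring]

lemma e1_scalar (k : ℕ) :
    legXi (k+2) * c (k+2) * (((k:ℝ)+1)*((k:ℝ)+2)) = legXi (k+1) * c k := by
  rw [xi2 k, xi_c' k]
  have h2 : Real.sqrt (2*(k:ℝ)+3) ≠ 0 := ne_of_gt (Real.sqrt_pos.2 (by positivity))
  have h3 : ((k).factorial : ℝ) ≠ 0 := by have := Nat.factorial_pos k; positivity
  have h4 : ((k+2).factorial : ℝ) ≠ 0 := by have := Nat.factorial_pos (k+2); positivity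
  rw [show k+2 = (k+1)+1 from by omega, fac_succ_real, fac_succ_real]
  push_cast
  field_simp
  ring

lemma e2_scalar (k : ℕ) :
    legXi (k+2) * c (k+2) * (2*(2*(k:ℝ)+3)*((k:ℝ)+2)) = c (k+1) := by
  rw [xi2 k, c]
  push_cast
  rw [show 2*((k:ℝ)+1)+1 = 2*(k:ℝ)+3 from by ring]
  have h2 : Real.sqrt (2*(k:ℝ)+3) ≠ 0 := ne_of_gt (Real.sqrt_pos.2 (by positivity))
  have h3 : ((k+1).factorial : ℝ) ≠ 0 := by have := Nat.factorial_pos (k+1); positivity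
  have hss : Real.sqrt (2*(k:ℝ)+3) * Real.sqrt (2*(k:ℝ)+3) = 2*(k:ℝ)+3 :=
    Real.mul_self_sqrt (by positivity)
  rw [show k+2 = (k+1)+1 from by omega, fac_succ_real]
  push_cast
  rw [div_mul_eq_mul_div, one_mul,
    div_eq_div_iff (by positivity) h3]
  linear_combination (-(2*(((k:ℝ)+1)+1) * ((k+1).factorial : ℝ))) * hss

lemma deriv_p_rec (k : ℕ) :
    derivative (legXi (k+2) • p (k+2) - legXi (k+1) • p k) = p (k+1) := by
  rw [derivative_sub, derivative_smul, derivative_smul, p, p, p,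
    derivative_C_mul, derivative_C_mul, star k]
  simp only [Polynomial.smul_eq_C_mul]
  have hC1 : C (legXi (k+2)) * C (c (k+2)) * C (((k:ℝ)+1)*((k:ℝ)+2))
      = C (legXi (k+1)) * C (c k) := by
    rw [← C_mul, ← C_mul, ← C_mul]
    exact congrArg C (e1_scalar k)
  have hC2 : C (legXi (k+2)) * C (c (k+2)) * C (2*(2*(k:ℝ)+3)*((k:ℝ)+2))
      = C (c (k+1)) := by
    rw [← C_mul, ← C_mul]
    exact congrArg C (e2_scalar k)
  linear_combination (derivative (Q k)) * hC1 + (Q (k+1)) * hC2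

noncomputable def Jp : ℕ → ℝ[X]
  | 0 => legXi 1 • p 1 + C (1/2)
  | (k+1) => legXi (k+2) • p (k+2) - legXi (k+1) • p k

lemma xi_c_zero : legXi 1 * c 1 = 1/2 := by
  have h := xi_c 0
  simp only [Nat.cast_zero, mul_zero, zero_add, Real.sqrt_one, zero_add] at h
  rw [h]
  norm_num [Nat.factorial]

lemma derivative_Jp (n : ℕ) : derivative (Jp n) = p n := by
  cases n with
  | zero =>
    show derivative (legXi 1 • p 1 + C (1/2)) = p 0
    rw [derivative_add, derivative_C, add_zero, derivative_smul, p, derivative_C_mul]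
    have h1 : derivative (Q 1) = C 2 := by
      rw [Q]
      simp only [f, pow_one, Function.iterate_one, derivative_mul, derivative_X,
        derivative_sub, derivative_one, one_mul, mul_one, sub_zero, derivative_add]
      norm_num
      rfl
    rw [h1, p_zero, Polynomial.smul_eq_C_mul, ← C_mul, ← C_mul, ← C_1]
    congr 1
    have := xi_c_zero
    linarith [xi_c_zero]
  | succ k => exact deriv_p_rec k

lemma p_eval_zero (n : ℕ) : (p n).eval 0 = c n * ((-1:ℝ)^n * n.factorial) := by
  rw [p, eval_mul, eval_C, Q_eval_zero]

lemma Jp_eval0 (n : ℕ) : (Jp n).eval 0 = 0 := by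
  cases n with
  | zero =>
    show eval (0:ℝ) (legXi 1 • p 1 + C (1/2)) = 0
    rw [eval_add, eval_C, Polynomial.smul_eq_C_mul, eval_mul, eval_C, p_eval_zero]
    simp only [pow_one, Nat.factorial_one, Nat.cast_one, mul_one]
    have := xi_c_zero
    nlinarith [xi_c_zero]
  | succ k =>
    show eval (0:ℝ) (legXi (k+2) • p (k+2) - legXi (k+1) • p k) = 0
    rw [eval_sub, Polynomial.smul_eq_C_mul, Polynomial.smul_eq_C_mul, eval_mul, eval_mul,
      eval_C, eval_C, p_eval_zero, p_eval_zero]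
    have ha := xi2 k
    have hb := xi_c' k
    have h2 : Real.sqrt (2*(k:ℝ)+3) ≠ 0 := ne_of_gt (Real.sqrt_pos.2 (by positivity))
    have h3 : ((k).factorial : ℝ) ≠ 0 := by have := Nat.factorial_pos k; positivity
    have h4 : ((k+2).factorial : ℝ) ≠ 0 := by have := Nat.factorial_pos (k+2); positivity
    have key : legXi (k+2) * c (k+2) * ((k+2).factorial : ℝ)
        = legXi (k+1) * c k * (k.factorial : ℝ) := by
      rw [ha, hb]
      field_simp
    have hpow : (-1:ℝ)^(k+2) = (-1:ℝ)^k := by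
      rw [pow_add]
      norm_num
    rw [hpow]
    linear_combination ((-1:ℝ)^k) * key

lemma poly_eq_of {G H : ℝ[X]} (hd : derivative G = derivative H)
    (h0 : G.eval 0 = H.eval 0) : G = H := by
  have h1 : derivative (G - H) = 0 := by rw [derivative_sub, hd, sub_self]
  have h2 := Polynomial.eq_C_of_natDegree_eq_zero
    (Polynomial.natDegree_eq_zero_of_derivative_eq_zero h1)
  have h3 : (G - H).eval 0 = 0 := by rw [eval_sub, h0, sub_self]
  rw [h2, eval_C] at h3
  have : G - H = 0 := by rw [h2, h3, map_zero]
  linear_combination this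

lemma sum_Jp (k : ℕ) (r : Fin (k+1) → ℝ) (hr : ∑ i, r i • p i = (X:ℝ[X])^k) :
    ∑ i : Fin (k+1), r i • Jp i = C (((k:ℝ)+1)⁻¹) * X^(k+1) := by
  have hk1 : ((k:ℝ)+1) ≠ 0 := by positivity
  apply poly_eq_of
  · rw [derivative_sum]
    rw [derivative_C_mul, derivative_X_pow]
    have : ∑ i : Fin (k+1), derivative (r i • Jp i) = ∑ i : Fin (k+1), r i • p i := by
      refine Finset.sum_congr rfl fun i _ => ?_
      rw [derivative_smul, derivative_Jp]
    rw [this, hr, Nat.add_sub_cancel, ← mul_assoc, ← C_mul,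
      show ((k:ℝ)+1)⁻¹ * ((k+1:ℕ):ℝ) = 1 from by push_cast; exact inv_mul_cancel₀ hk1,
      C_1, one_mul]
  · rw [eval_finset_sum, eval_mul, eval_pow, eval_X, zero_pow (Nat.succ_ne_zero k), mul_zero]
    refine Finset.sum_eq_zero fun i _ => ?_
    rw [Polynomial.smul_eq_C_mul, eval_mul, Jp_eval0, mul_zero]

end Leg

/-- The coefficient A(τ,σ) = 1/2 + Σ_{ι=0}^{N₁} ξ_{ι+1}P_{ι+1}(τ)P_ι(σ)
− Σ_{ι=0}^{N₂} ξ_{ι+1}P_{ι+1}(σ)P_ι(τ) satisfies the simplifying condition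
C̆(α) with α = min(N₁+1, N₂+2): ∫₀¹ A(τ,σ) σ^(κ−1) dσ = τ^κ/κ for 1 ≤ κ ≤ α. -/
theorem simplifying_condition_C
    (N₁ N₂ : ℕ)
    (A : ℝ → ℝ → ℝ)
    (hA : ∀ τ σ : ℝ, A τ σ = 1 / 2
      + ∑ ι ∈ Finset.range (N₁ + 1), legXi (ι + 1) * legP (ι + 1) τ * legP ι σ
      - ∑ ι ∈ Finset.range (N₂ + 1), legXi (ι + 1) * legP (ι + 1) σ * legP ι τ) :
    ∀ κ : ℕ, 1 ≤ κ → κ ≤ min (N₁ + 1) (N₂ + 2) →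
      ∀ τ ∈ Set.Icc (0:ℝ) 1,
        ∫ σ in (0:ℝ)..1, A τ σ * σ ^ (κ - 1) = τ ^ κ / κ := by
  intro κ hκ1 hκ τ _
  obtain ⟨k, rfl⟩ : ∃ k, κ = k + 1 := ⟨κ - 1, by omega⟩
  have hN1 : k + 1 ≤ N₁ + 1 := le_trans hκ (min_le_left _ _)
  have hN2 : k + 1 ≤ N₂ + 2 := le_trans hκ (min_le_right _ _)
  rw [Nat.add_sub_cancel]
  obtain ⟨r, hr⟩ := Leg.exists_rep k
  set r' : ℕ → ℝ := fun i => if h : i < k + 1 then r ⟨i, h⟩ else 0 with hr'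
  have hXk : Leg.J ((X:ℝ[X])^k) = 1/((k:ℝ)+1) := by
    simp [Leg.J, integral_pow]
  have hm : ∀ ι : ℕ, Leg.J (Leg.p ι * X^k) = r' ι := by
    intro ι
    by_cases h : ι < k + 1
    · have h2 := Leg.J_p_rep hr ⟨ι, h⟩
      rw [hr']
      simp only [h, dif_pos]
      exact h2
    · rw [Leg.J_p_low (by omega), hr']
      simp [h]
  have hr0 : r' 0 = 1/((k:ℝ)+1) := by
    rw [← hm 0, Leg.p_zero, one_mul, hXk]
  set P : ℝ[X] := (C (1/2)
      + (∑ ι ∈ Finset.range (N₁+1), C (legXi (ι+1) * legP (ι+1) τ) * Leg.p ι)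
      - (∑ ι ∈ Finset.range (N₂+1), C (legXi (ι+1) * legP ι τ) * Leg.p (ι+1))) * X^k
    with hP
  have hint : Set.EqOn (fun σ => A τ σ * σ ^ k) (fun σ => P.eval σ) (Set.uIcc 0 1) := by
    intro σ _
    have t1 : ∑ ι ∈ Finset.range (N₁+1), legXi (ι+1) * legP (ι+1) τ * legP ι σ
        = ∑ ι ∈ Finset.range (N₁+1), (legXi (ι+1) * legP (ι+1) τ) * (Leg.p ι).eval σ := by
      refine Finset.sum_congr rfl fun ι _ => ?_
      rw [Leg.legP_eval ι σ]
    have t2 : ∑ ι ∈ Finset.range (N₂+1), legXi (ι+1) * legP (ι+1) σ * legP ι τ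
        = ∑ ι ∈ Finset.range (N₂+1), (legXi (ι+1) * legP ι τ) * (Leg.p (ι+1)).eval σ := by
      refine Finset.sum_congr rfl fun ι _ => ?_
      rw [Leg.legP_eval (ι+1) σ]
      ring
    show A τ σ * σ ^ k = P.eval σ
    rw [hA, t1, t2, hP]
    simp only [eval_mul, eval_add, eval_sub, eval_C, eval_finset_sum, eval_pow, eval_X]
  rw [intervalIntegral.integral_congr hint]
  have hJP : (∫ σ in (0:ℝ)..1, P.eval σ)
      = 1/2 * (1/((k:ℝ)+1))
        + (∑ ι ∈ Finset.range (N₁+1), legXi (ι+1) * legP (ι+1) τ * r' ι)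
        - (∑ ι ∈ Finset.range (N₂+1), legXi (ι+1) * legP ι τ * r' (ι+1)) := by
    show Leg.J P = _
    rw [hP, sub_mul, add_mul, Finset.sum_mul, Finset.sum_mul, Leg.J_sub, Leg.J_add,
      Leg.J_sum, Leg.J_sum, Leg.J_Cmul, hXk]
    congr 1
    congr 1
    · refine Finset.sum_congr rfl fun ι _ => ?_
      rw [mul_assoc, Leg.J_Cmul, hm ι]
    · refine Finset.sum_congr rfl fun ι _ => ?_
      rw [mul_assoc, Leg.J_Cmul, hm (ι+1)]
  rw [hJP]
  have hS1 : (∑ ι ∈ Finset.range (N₁+1), legXi (ι+1) * legP (ι+1) τ * r' ι)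
      = ∑ ι ∈ Finset.range (k+1), legXi (ι+1) * legP (ι+1) τ * r' ι := by
    symm
    apply Finset.sum_subset (Finset.range_subset_range.2 (by omega))
    intro x hx hnx
    have hx2 : ¬ x < k + 1 := by simpa using hnx
    rw [hr']
    simp [hx2]
  have hS2 : (∑ ι ∈ Finset.range (N₂+1), legXi (ι+1) * legP ι τ * r' (ι+1))
      = ∑ ι ∈ Finset.range k, legXi (ι+1) * legP ι τ * r' (ι+1) := by
    symm
    apply Finset.sum_subset (Finset.range_subset_range.2 (by omega))
    intro x hx hnx
    have hx2 : ¬ x < k := by simpa using hnx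
    have hx3 : ¬ (x + 1 < k + 1) := by omega
    rw [hr']
    simp [hx3]
  rw [hS1, hS2]
  have hs := congrArg (eval τ) (Leg.sum_Jp k r hr)
  rw [eval_finset_sum, eval_mul, eval_C, eval_pow, eval_X] at hs
  have hg : ∀ i : Fin (k+1), (r i • Leg.Jp (i:ℕ)).eval τ = r' (i:ℕ) * (Leg.Jp (i:ℕ)).eval τ := by
    intro i
    rw [Polynomial.smul_eq_C_mul, eval_mul, eval_C, hr']
    simp [i.isLt]
  rw [Finset.sum_congr rfl (fun i _ => hg i),
    Fin.sum_univ_eq_sum_range (fun ι => r' ι * (Leg.Jp ι).eval τ) (k+1)] at hs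
  have hk1 : ((k:ℝ)+1) ≠ 0 := by positivity
  have hs' : (τ:ℝ)^(k+1)/(((k+1:ℕ)):ℝ)
      = ∑ ι ∈ Finset.range (k+1), r' ι * (Leg.Jp ι).eval τ := by
    rw [hs]
    push_cast
    field_simp
  rw [hs']
  rw [Finset.sum_range_succ' (fun ι => r' ι * (Leg.Jp ι).eval τ) k,
    Finset.sum_range_succ' (fun ι => legXi (ι+1) * legP (ι+1) τ * r' ι) k]
  have hJp0 : (Leg.Jp 0).eval τ = legXi 1 * legP 1 τ + 1/2 := by
    show eval τ (legXi 1 • Leg.p 1 + C (1/2)) = _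
    rw [eval_add, eval_C, Polynomial.smul_eq_C_mul, eval_mul, eval_C, Leg.legP_eval]
  have hJps : ∀ ι : ℕ, (Leg.Jp (ι+1)).eval τ
      = legXi (ι+2) * legP (ι+2) τ - legXi (ι+1) * legP ι τ := by
    intro ι
    show eval τ (legXi (ι+2) • Leg.p (ι+2) - legXi (ι+1) • Leg.p ι) = _
    rw [eval_sub, Polynomial.smul_eq_C_mul, Polynomial.smul_eq_C_mul, eval_mul, eval_mul,
      eval_C, eval_C, Leg.legP_eval, Leg.legP_eval]
  simp only [hJp0, hJps, show ∀ x:ℕ, x+1+1 = x+2 from fun _ => rfl]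
  have hcomb : (∑ ι ∈ Finset.range k, legXi (ι+2) * legP (ι+2) τ * r' (ι+1))
        - (∑ ι ∈ Finset.range k, legXi (ι+1) * legP ι τ * r' (ι+1))
      = ∑ ι ∈ Finset.range k,
          r' (ι+1) * (legXi (ι+2) * legP (ι+2) τ - legXi (ι+1) * legP ι τ) := by
    rw [← Finset.sum_sub_distrib]
    refine Finset.sum_congr rfl fun ι _ => ?_
    ring
  linear_combination hcomb - (1/2 : ℝ) * hr0
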